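/- Let k be a field of characteristic 2 with algebraic closure k̄, and let a ∈ k̄ satisfy a ∉ k and a² ∈ k. Let k' = k(a) ⊆ k̄, and let μ : k̄ ⊗_k k' → k̄ be the k-algebra homomorphism induced by the inclusion k̄ → k̄ and the inclusion k' → k̄ (so μ(c ⊗ d) = c·d). Then for all x, y ∈ k̄ ⊗_k k' satisfying x² + (1 ⊗ a)·y² = 1, one has μ(x) = 1 and μ(y) = 0. -/

import Mathlib

open TensorProduct

theorem sq_add_char2 {k : Type*} [Field k] [CharP k 2] {A : Type*} [CommRing A] [Algebra k A]
    (z w : A) : (z + w) * (z + w) = z * z + w * w := by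
  have h2 : (2 : k) = 0 := by exact_mod_cast CharP.cast_eq_zero k 2
  have h : z * w + z * w = 0 := by
    calc z * w + z * w = ((1 : k) + 1) • (z * w) := by rw [add_smul, one_smul]
    _ = (2 : k) • (z * w) := by norm_num
    _ = 0 := by rw [h2, zero_smul]
  linear_combination h

set_option maxHeartbeats 1000000 in
set_option synthInstance.maxHeartbeats 1000000 in

theorem stmt_3 {k : Type*} [Field k] [CharP k 2]
    (a : AlgebraicClosure k)
    (ha : a ∉ Set.range (algebraMap k (AlgebraicClosure k)))
    (ha2 : a ^ 2 ∈ Set.range (algebraMap k (AlgebraicClosure k)))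
    (k' : IntermediateField k (AlgebraicClosure k))
    (hk' : k' = IntermediateField.adjoin k {a})
    (μ : (AlgebraicClosure k) ⊗[k] k' →ₐ[k] AlgebraicClosure k)
    (hμ : ∀ (c : AlgebraicClosure k) (d : k'), μ (c ⊗ₜ d) = c * (d : AlgebraicClosure k))
    (x y : (AlgebraicClosure k) ⊗[k] k')
    (hak' : a ∈ k')
    (hxy : x ^ 2 + (((1 : AlgebraicClosure k) ⊗ₜ[k] (⟨a, hak'⟩ : k') : (AlgebraicClosure k) ⊗[k] k')) * y ^ 2 = 1) :
    μ x = 1 ∧ μ y = 0 := by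
  obtain ⟨s, hs⟩ := ha2
  set b : k' := ⟨a, hak'⟩ with hbdef
  have hba : (b : AlgebraicClosure k) = a := rfl
  have hsa : a * a = algebraMap k (AlgebraicClosure k) s := by rw [← pow_two, ← hs]
  have hb2 : b * b = algebraMap k k' s := by
    apply Subtype.ext
    push_cast [hba]
    rw [hsa]
  have hint : IsIntegral k a := by
    refine ⟨Polynomial.X ^ 2 - Polynomial.C s, ?_, ?_⟩
    · apply Polynomial.monic_X_pow_sub_C _ (by norm_num)
    · simp [Polynomial.eval₂, hs]
  have hdecK : ∀ z : AlgebraicClosure k, z ∈ IntermediateField.adjoin k {a} →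
      ∃ α β : k, z = algebraMap k (AlgebraicClosure k) α + β • a := by
    intro z hz
    have hz' : z ∈ Algebra.adjoin k {a} := by
      rw [← IntermediateField.adjoin_simple_toSubalgebra_of_isAlgebraic hint.isAlgebraic]
      exact hz
    clear hz
    induction hz' using Algebra.adjoin_induction with
    | mem w hw =>
      rcases hw with rfl
      exact ⟨0, 1, by simp⟩
    | algebraMap r => exact ⟨r, 0, by simp⟩
    | add w₁ w₂ h₁ h₂ ih₁ ih₂ =>
      obtain ⟨α₁, β₁, rfl⟩ := ih₁
      obtain ⟨α₂, β₂, rfl⟩ := ih₂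
      exact ⟨α₁ + α₂, β₁ + β₂, by rw [map_add, add_smul]; ring⟩
    | mul w₁ w₂ h₁ h₂ ih₁ ih₂ =>
      obtain ⟨α₁, β₁, rfl⟩ := ih₁
      obtain ⟨α₂, β₂, rfl⟩ := ih₂
      refine ⟨α₁ * α₂ + β₁ * β₂ * s, α₁ * β₂ + β₁ * α₂, ?_⟩
      simp only [Algebra.smul_def, map_add, map_mul]
      linear_combination (algebraMap k (AlgebraicClosure k) β₁ *
        algebraMap k (AlgebraicClosure k) β₂) * hsa
  have hdec : ∀ d : k', ∃ α β : k, d = algebraMap k k' α + β • b := by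
    intro d
    obtain ⟨α, β, hd⟩ := hdecK d (by rw [← hk']; exact d.2)
    refine ⟨α, β, ?_⟩
    apply Subtype.ext
    push_cast [hba]
    rw [hd]
  have hsqk' : ∀ d : k', ∃ e : k, d * d = algebraMap k k' e := by
    intro d
    obtain ⟨α, β, rfl⟩ := hdec d
    refine ⟨α * α + β * β * s, ?_⟩
    rw [sq_add_char2 (k := k), ← map_mul, smul_mul_smul_comm, hb2, Algebra.smul_def,
      ← map_mul, ← map_add]
  have hsq : ∀ z : (AlgebraicClosure k) ⊗[k] k', ∃ u : AlgebraicClosure k,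
      z * z = u ⊗ₜ (1 : k') := by
    intro z
    induction z using TensorProduct.induction_on with
    | zero => exact ⟨0, by simp⟩
    | tmul c d =>
      obtain ⟨e, he⟩ := hsqk' d
      refine ⟨e • (c * c), ?_⟩
      rw [Algebra.TensorProduct.tmul_mul_tmul, he, Algebra.algebraMap_eq_smul_one,
        tmul_smul, smul_tmul']
    | add z w ihz ihw =>
      obtain ⟨u₁, h₁⟩ := ihz
      obtain ⟨u₂, h₂⟩ := ihw
      exact ⟨u₁ + u₂, by rw [add_tmul, ← h₁, ← h₂]; exact sq_add_char2 (k := k) z w⟩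
  have ha0 : a ≠ 0 := fun h => ha ⟨0, by simp [h]⟩
  have hli : LinearIndependent k ![(1 : k'), b] := by
    rw [linearIndependent_fin2]
    constructor
    · simp only [Matrix.cons_val_one, Matrix.head_cons]
      intro h
      exact ha0 (by rw [← hba]; simpa using h)
    · intro c h
      simp only [Matrix.cons_val_one, Matrix.head_cons, Matrix.cons_val_zero] at h
      have hc : c ≠ 0 := by
        rintro rfl
        simp at h
      apply ha
      refine ⟨c⁻¹, ?_⟩
      have h2 : c • a = 1 := by
        have := congrArg (Subtype.val) h
        push_cast at this
        exact this
      rw [Algebra.smul_def] at h2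
      rw [map_inv₀]
      exact (eq_inv_of_mul_eq_one_right h2).symm
  have hsp : ⊤ ≤ Submodule.span k (Set.range ![(1 : k'), b]) := by
    intro d _
    have hrange : Set.range ![(1 : k'), b] = {1, b} := by
      ext w
      simp [Fin.exists_fin_two, or_comm]
    rw [hrange]
    obtain ⟨α, β, rfl⟩ := hdec d
    rw [Submodule.mem_span_pair]
    exact ⟨α, β, by rw [Algebra.algebraMap_eq_smul_one]⟩
  let B : Module.Basis (Fin 2) k k' := Module.Basis.mk hli hsp
  have hB0 : B 0 = 1 := by simp [B]
  have hB1 : B 1 = b := by simp [B]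
  let TB : Module.Basis (Fin 2) (AlgebraicClosure k) ((AlgebraicClosure k) ⊗[k] k') :=
    Algebra.TensorProduct.basis (AlgebraicClosure k) B
  obtain ⟨u, hu⟩ := hsq x
  obtain ⟨v, hv⟩ := hsq y
  have heq : u ⊗ₜ[k] (1 : k') + v ⊗ₜ[k] b = (1 : AlgebraicClosure k) ⊗ₜ[k] (1 : k') := by
    have := hxy
    rw [pow_two, pow_two, hu, hv, Algebra.TensorProduct.tmul_mul_tmul, one_mul, mul_one,
      Algebra.TensorProduct.one_def] at this
    exact this
  have heq' : u • TB 0 + v • TB 1 = (1 : AlgebraicClosure k) • TB 0 := by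
    show u • Algebra.TensorProduct.basis (AlgebraicClosure k) B 0 + _ = _
    rw [Algebra.TensorProduct.basis_repr_symm_apply', Algebra.TensorProduct.basis_repr_symm_apply',
      Algebra.TensorProduct.basis_repr_symm_apply', hB0, hB1]
    exact heq
  have hrepr := congrArg TB.repr heq'
  simp only [map_add, map_smul, Module.Basis.repr_self, one_smul] at hrepr
  have h0 := DFunLike.congr_fun hrepr 0
  have h1 := DFunLike.congr_fun hrepr 1
  simp [Finsupp.single_apply] at h0 h1
  have hμx : μ x * μ x = 1 := by
    rw [← map_mul, hu, hμ, h0]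
    simp
  have hμy : μ y * μ y = 0 := by
    rw [← map_mul, hv, hμ, h1]
    simp
  have h2K : (2 : AlgebraicClosure k) = 0 := by
    exact_mod_cast CharP.cast_eq_zero (AlgebraicClosure k) 2
  constructor
  · have hz : (μ x - 1) * (μ x - 1) = 0 := by
      linear_combination hμx + (1 - μ x) * h2K
    exact sub_eq_zero.mp (mul_self_eq_zero.mp hz)
  · exact mul_self_eq_zero.mp hμy
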